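/- arXiv:0909.0633 — 4 statements merged into one kernel-verified Lean document; each statement's English description precedes it below -/
import Mathlib

section
/- Let (A(τ))_{τ ∈ ℕ} be a discrete-time process with A(0) = 0 and A(τ) = λτ + Z(τ), where each Z(τ) is centered Gaussian with variance σ²τ^(2H), σ > 0, H ∈ (1/2,1). Fix β ∈ (0,1−H), η ∈ (0,1), and set E(τ) = λτ + √(−2 log η)·σ·τ^(H+β). Then P[∃ τ ≥ 0: A(τ) > E(τ)] ≤ Γ(1/(2β)) / (2β · (−log η)^(1/(2β))). -/
open Real Set MeasureTheory ProbabilityTheory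
open scoped NNReal ENNReal
open Filter

lemma fbm_aux_gauss_tail {v : ℝ≥0} (hv : v ≠ 0) {c : ℝ} (hc : 0 ≤ c) :
    gaussianReal 0 v (Ioi c) ≤ ENNReal.ofReal (Real.exp (-c ^ 2 / (2 * (v : ℝ)))) := by
  have hvpos : (0 : ℝ) < (v : ℝ) := lt_of_le_of_ne v.coe_nonneg (by exact_mod_cast (Ne.symm hv))
  rw [gaussianReal_apply 0 hv]
  calc ∫⁻ x in Ioi c, gaussianPDF 0 v x
      ≤ ∫⁻ x in Ioi c, ENNReal.ofReal (Real.exp (-c ^ 2 / (2 * (v : ℝ)))) * gaussianPDF c v x := by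
        refine setLIntegral_mono ((measurable_gaussianPDF c v).const_mul _) fun x hx => ?_
        rw [gaussianPDF, gaussianPDF, ← ENNReal.ofReal_mul (Real.exp_nonneg _)]
        apply ENNReal.ofReal_le_ofReal
        rw [gaussianPDFReal, gaussianPDFReal]
        have hx' : c ≤ x := le_of_lt hx
        have h1 : (x - 0) ^ 2 / (2 * (v : ℝ)) ≥ c ^ 2 / (2 * (v : ℝ)) + (x - c) ^ 2 / (2 * (v : ℝ)) := by
          rw [ge_iff_le, ← add_div, div_le_div_iff_of_pos_right (by positivity)]
          nlinarith
        have h2 : Real.exp (-(x - 0) ^ 2 / (2 * (v : ℝ)))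
            ≤ Real.exp (-c ^ 2 / (2 * (v : ℝ))) * Real.exp (-(x - c) ^ 2 / (2 * (v : ℝ))) := by
          rw [← Real.exp_add]
          apply Real.exp_le_exp.mpr
          rw [neg_div, neg_div, neg_div, ← neg_add]
          linarith
        calc (√(2 * π * v))⁻¹ * Real.exp (-(x - 0) ^ 2 / (2 * (v : ℝ)))
            ≤ (√(2 * π * v))⁻¹ * (Real.exp (-c ^ 2 / (2 * (v : ℝ))) * Real.exp (-(x - c) ^ 2 / (2 * (v : ℝ)))) := by
              apply mul_le_mul_of_nonneg_left h2 (by positivity)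
          _ = Real.exp (-c ^ 2 / (2 * (v : ℝ))) * ((√(2 * π * v))⁻¹ * Real.exp (-(x - c) ^ 2 / (2 * (v : ℝ)))) := by ring
    _ = ENNReal.ofReal (Real.exp (-c ^ 2 / (2 * (v : ℝ)))) * ∫⁻ x in Ioi c, gaussianPDF c v x := by
        rw [lintegral_const_mul _ (measurable_gaussianPDF c v)]
    _ ≤ ENNReal.ofReal (Real.exp (-c ^ 2 / (2 * (v : ℝ)))) * ∫⁻ x, gaussianPDF c v x := by
        gcongr
        exact Measure.restrict_le_self
    _ = ENNReal.ofReal (Real.exp (-c ^ 2 / (2 * (v : ℝ)))) := by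
        rw [lintegral_gaussianPDF_eq_one c hv, mul_one]

lemma fbm_aux_integrable {b p : ℝ} (hb : 0 < b) (hp : 0 < p) :
    IntegrableOn (fun t : ℝ => Real.exp (-b * t ^ p)) (Ioi 0) := by
  have hmeas : Measurable (fun t : ℝ => Real.exp (-b * t ^ p)) := by
    fun_prop
  have h1 : (fun t : ℝ => Real.exp (-b * t ^ p)) =o[atTop] fun t : ℝ => t ^ (-2 : ℝ) := by
    have h0 := (isLittleO_exp_neg_mul_rpow_atTop hb (-2 / p)).comp_tendsto (tendsto_rpow_atTop hp)
    refine h0.congr' (EventuallyEq.refl _ _) ?_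
    filter_upwards [eventually_ge_atTop (0 : ℝ)] with t ht
    simp only [Function.comp_apply]
    rw [← Real.rpow_mul ht]
    congr 1
    field_simp
  obtain ⟨c, hc⟩ := eventually_atTop.mp (h1.def one_pos)
  set c' : ℝ := max c 1 with hc'
  have hc'pos : (0 : ℝ) < c' := lt_of_lt_of_le one_pos (le_max_right _ _)
  have hIoi : IntegrableOn (fun t : ℝ => Real.exp (-b * t ^ p)) (Ioi c') := by
    refine Integrable.mono (integrableOn_Ioi_rpow_of_lt (by norm_num : (-2:ℝ) < -1) hc'pos)
      hmeas.aestronglyMeasurable ?_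
    filter_upwards [ae_restrict_mem measurableSet_Ioi] with x hx
    have : c ≤ x := le_trans (le_max_left _ _) (le_of_lt hx)
    simpa using hc x this
  have hIoc : IntegrableOn (fun t : ℝ => Real.exp (-b * t ^ p)) (Ioc 0 c') := by
    have hconst : IntegrableOn (fun _ : ℝ => (1:ℝ)) (Ioc (0:ℝ) c') volume :=
      (integrableOn_const_iff).mpr (Or.inr measure_Ioc_lt_top)
    refine Integrable.mono hconst hmeas.aestronglyMeasurable ?_
    filter_upwards [ae_restrict_mem measurableSet_Ioc] with x hx
    rw [Real.norm_of_nonneg (Real.exp_nonneg _), norm_one]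
    rw [Real.exp_le_one_iff]
    have : 0 ≤ x ^ p := Real.rpow_nonneg (le_of_lt hx.1) p
    nlinarith
  have : Ioc (0:ℝ) c' ∪ Ioi c' = Ioi 0 := Ioc_union_Ioi_eq_Ioi (le_of_lt hc'pos)
  rw [← this]
  exact hIoc.union hIoi

lemma fbm_aux_sum_le {b p : ℝ} (hb : 0 < b) (hp : 0 < p) :
    ∑' n : ℕ, ENNReal.ofReal (Real.exp (-b * ((n : ℝ) + 1) ^ p)) ≤
      ENNReal.ofReal (Real.Gamma (1 / p) / (p * b ^ (1 / p))) := by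
  have hmeas : Measurable (fun t : ℝ => ENNReal.ofReal (Real.exp (-b * t ^ p))) := by fun_prop
  have hUnion : (⋃ n : ℕ, Ioc (n : ℝ) ((n : ℝ) + 1)) = Ioi (0 : ℝ) := by
    ext x
    simp only [mem_iUnion, mem_Ioc, mem_Ioi]
    constructor
    · rintro ⟨n, hn, -⟩
      exact lt_of_le_of_lt (Nat.cast_nonneg n) hn
    · intro hx
      refine ⟨⌈x⌉₊ - 1, ?_, ?_⟩
      · have h1 : 1 ≤ ⌈x⌉₊ := Nat.one_le_ceil_iff.mpr hx
        have h2 : (⌈x⌉₊ : ℝ) < x + 1 := Nat.ceil_lt_add_one (le_of_lt hx)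
        have : ((⌈x⌉₊ - 1 : ℕ) : ℝ) = (⌈x⌉₊ : ℝ) - 1 := by
          push_cast [h1]; ring
        rw [this]; linarith
      · have h1 : 1 ≤ ⌈x⌉₊ := Nat.one_le_ceil_iff.mpr hx
        have : ((⌈x⌉₊ - 1 : ℕ) : ℝ) = (⌈x⌉₊ : ℝ) - 1 := by push_cast [h1]; ring
        rw [this]
        have := Nat.le_ceil x
        linarith
  have hdisj : Pairwise (Function.onFun Disjoint fun n : ℕ => Ioc (n : ℝ) ((n : ℝ) + 1)) := by
    intro m n hmn
    apply Set.Ioc_disjoint_Ioc.mpr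
    rcases hmn.lt_or_gt with h | h
    · have : (m : ℝ) + 1 ≤ (n : ℝ) := by exact_mod_cast Nat.succ_le_of_lt h
      calc min ((m:ℝ)+1) ((n:ℝ)+1) ≤ (m:ℝ)+1 := min_le_left _ _
        _ ≤ (n:ℝ) := this
        _ ≤ max (m:ℝ) (n:ℝ) := le_max_right _ _
    · have : (n : ℝ) + 1 ≤ (m : ℝ) := by exact_mod_cast Nat.succ_le_of_lt h
      calc min ((m:ℝ)+1) ((n:ℝ)+1) ≤ (n:ℝ)+1 := min_le_right _ _
        _ ≤ (m:ℝ) := this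
        _ ≤ max (m:ℝ) (n:ℝ) := le_max_left _ _
  calc ∑' n : ℕ, ENNReal.ofReal (Real.exp (-b * ((n : ℝ) + 1) ^ p))
      ≤ ∑' n : ℕ, ∫⁻ t in Ioc (n : ℝ) ((n : ℝ) + 1), ENNReal.ofReal (Real.exp (-b * t ^ p)) := by
        refine ENNReal.tsum_le_tsum fun n => ?_
        have h1 : ENNReal.ofReal (Real.exp (-b * ((n : ℝ) + 1) ^ p))
            = ∫⁻ _ in Ioc (n : ℝ) ((n : ℝ) + 1), ENNReal.ofReal (Real.exp (-b * ((n : ℝ) + 1) ^ p)) := by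
          rw [setLIntegral_const, Real.volume_Ioc]
          norm_num
        rw [h1]
        refine setLIntegral_mono hmeas fun t ht => ?_
        apply ENNReal.ofReal_le_ofReal
        apply Real.exp_le_exp.mpr
        have ht0 : (0 : ℝ) ≤ t := le_trans (Nat.cast_nonneg n) (le_of_lt ht.1)
        have : t ^ p ≤ ((n : ℝ) + 1) ^ p := Real.rpow_le_rpow ht0 ht.2 (le_of_lt hp)
        nlinarith
    _ = ∫⁻ t in Ioi (0 : ℝ), ENNReal.ofReal (Real.exp (-b * t ^ p)) := by
        rw [← hUnion, lintegral_iUnion (fun n => measurableSet_Ioc) hdisj]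
    _ = ENNReal.ofReal (∫ t in Ioi (0 : ℝ), Real.exp (-b * t ^ p)) := by
        rw [← ofReal_integral_eq_lintegral_ofReal (fbm_aux_integrable hb hp)]
        exact Eventually.of_forall fun t => Real.exp_nonneg _
    _ = ENNReal.ofReal (Real.Gamma (1 / p) / (p * b ^ (1 / p))) := by
        rw [integral_exp_neg_mul_rpow hp hb, Real.Gamma_add_one (one_div_ne_zero (ne_of_gt hp))]
        congr 1
        have hbp : (0:ℝ) < b ^ (1 / p) := Real.rpow_pos_of_pos hb _
        rw [show (-1 : ℝ) / p = -(1 / p) by ring, Real.rpow_neg (le_of_lt hb)]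
        rw [eq_div_iff (by positivity)]
        field_simp

theorem fbm_sample_path_envelope {Ω : Type*} [MeasurableSpace Ω] (μ : Measure Ω)
    [IsProbabilityMeasure μ] (A Z : ℕ → Ω → ℝ) (lam σ H β η : ℝ)
    (hσ : 0 < σ) (hH : H ∈ Set.Ioo (1/2 : ℝ) 1) (hβ : β ∈ Set.Ioo (0:ℝ) (1 - H))
    (hη : η ∈ Set.Ioo (0:ℝ) 1)
    (hA0 : ∀ ω, A 0 ω = 0)
    (hA : ∀ τ : ℕ, ∀ ω, A τ ω = lam * τ + Z τ ω)
    (hZ : ∀ τ : ℕ, 1 ≤ τ →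
      Measure.map (Z τ) μ = gaussianReal 0 (Real.toNNReal (σ ^ 2 * (τ : ℝ) ^ (2 * H)))) :
    μ {ω | ∃ τ : ℕ, A τ ω >
        lam * τ + Real.sqrt (-2 * Real.log η) * σ * (τ : ℝ) ^ (H + β)} ≤
      ENNReal.ofReal (Real.Gamma (1 / (2 * β)) / (2 * β * (-Real.log η) ^ (1 / (2 * β)))) := by
  set b : ℝ := -Real.log η with hbdef
  have hb : 0 < b := neg_pos.mpr (Real.log_neg hη.1 hη.2)
  have hp : 0 < 2 * β := by linarith [hβ.1]
  have hHβ : 0 < H + β := by linarith [hH.1, hβ.1]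
  set S : ℕ → Set Ω := fun τ =>
    {ω | A τ ω > lam * τ + Real.sqrt (-2 * Real.log η) * σ * (τ : ℝ) ^ (H + β)} with hSdef
  -- the event is contained in the union over τ ≥ 1
  have hsub : {ω | ∃ τ : ℕ, A τ ω >
      lam * τ + Real.sqrt (-2 * Real.log η) * σ * (τ : ℝ) ^ (H + β)} ⊆ ⋃ n : ℕ, S (n + 1) := by
    intro ω hω
    obtain ⟨τ, hτ⟩ := hω
    match τ with
    | 0 =>
      exfalso
      rw [hA0 ω, Nat.cast_zero, mul_zero, Real.zero_rpow (ne_of_gt hHβ), mul_zero,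
        add_zero] at hτ
      exact lt_irrefl 0 hτ
    | n + 1 =>
      exact mem_iUnion.mpr ⟨n, hτ⟩
  -- bound each term
  have hterm : ∀ n : ℕ, μ (S (n + 1)) ≤
      ENNReal.ofReal (Real.exp (-b * ((n : ℝ) + 1) ^ (2 * β))) := by
    intro n
    set τ : ℕ := n + 1 with hτdef
    have hτ1 : 1 ≤ τ := Nat.le_add_left 1 n
    have hτpos : (0 : ℝ) < (τ : ℝ) := by exact_mod_cast Nat.lt_of_lt_of_le Nat.zero_lt_one hτ1
    set c : ℝ := Real.sqrt (-2 * Real.log η) * σ * (τ : ℝ) ^ (H + β) with hcdef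
    have hc0 : 0 ≤ c := by positivity
    set v : ℝ≥0 := Real.toNNReal (σ ^ 2 * (τ : ℝ) ^ (2 * H)) with hvdef
    have hvpos : (0 : ℝ) < σ ^ 2 * (τ : ℝ) ^ (2 * H) := by positivity
    have hv0 : v ≠ 0 := ne_of_gt (Real.toNNReal_pos.mpr hvpos)
    have hvr : ((v : ℝ)) = σ ^ 2 * (τ : ℝ) ^ (2 * H) := Real.coe_toNNReal _ (le_of_lt hvpos)
    -- Z τ is a.e. measurable
    have hZae : AEMeasurable (Z τ) μ := by
      by_contra h
      have h1 := hZ τ hτ1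
      rw [Measure.map_of_not_aemeasurable h] at h1
      have h2 := congrArg (fun m : Measure ℝ => m univ) h1
      simp [measure_univ] at h2
    have hset : S τ = Z τ ⁻¹' (Ioi c) := by
      ext ω
      simp only [hSdef, mem_setOf_eq, mem_preimage, mem_Ioi, hA τ ω, gt_iff_lt,
        add_lt_add_iff_left, hcdef]
    have hmap : μ (S τ) = (Measure.map (Z τ) μ) (Ioi c) := by
      rw [hset, Measure.map_apply_of_aemeasurable hZae measurableSet_Ioi]
    rw [hmap, hZ τ hτ1]
    refine le_trans (fbm_aux_gauss_tail hv0 hc0) (le_of_eq ?_)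
    congr 1
    -- exponent computation
    have hs : Real.sqrt (-2 * Real.log η) ^ 2 = 2 * b := by
      rw [Real.sq_sqrt (by linarith)]; ring
    have e1 : ((τ : ℝ) ^ (H + β)) ^ 2 = (τ : ℝ) ^ (2 * H) * (τ : ℝ) ^ (2 * β) := by
      rw [sq, ← Real.rpow_add hτpos, show H + β + (H + β) = 2 * H + 2 * β by ring,
        Real.rpow_add hτpos]
    have hc2 : c ^ 2 = 2 * b * σ ^ 2 * ((τ : ℝ) ^ (2 * H) * (τ : ℝ) ^ (2 * β)) := by
      rw [hcdef, mul_pow, mul_pow, hs, e1]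
      try ring
    have hveq : ((v : ℝ≥0) : ℝ) = σ ^ 2 * (τ : ℝ) ^ (2 * H) := hvr
    have hτn : ((τ : ℕ) : ℝ) = (n : ℝ) + 1 := by rw [hτdef]; push_cast; ring
    rw [hveq, ← hτn]
    congr 1
    rw [div_eq_iff (by positivity), hc2]
    ring
  calc μ {ω | ∃ τ : ℕ, A τ ω >
        lam * τ + Real.sqrt (-2 * Real.log η) * σ * (τ : ℝ) ^ (H + β)}
      ≤ μ (⋃ n : ℕ, S (n + 1)) := measure_mono hsub
    _ ≤ ∑' n : ℕ, μ (S (n + 1)) := measure_iUnion_le _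
    _ ≤ ∑' n : ℕ, ENNReal.ofReal (Real.exp (-b * ((n : ℝ) + 1) ^ (2 * β))) :=
        ENNReal.tsum_le_tsum hterm
    _ ≤ ENNReal.ofReal (Real.Gamma (1 / (2 * β)) / (2 * β * b ^ (1 / (2 * β)))) :=
        fbm_aux_sum_le hb hp
end

section
/- Let (A(τ))_{τ ∈ ℕ} be as in the fBm model (A(0)=0, A(τ) = λτ + Z(τ), Z(τ) ~ N(0, σ²τ^(2H)), H ∈ (1/2,1)), and let C > λ, b > 0, β ∈ (0,1−H). Then P[sup_{τ ≥ 0} (A(τ) − Cτ) > b] ≤ Γ(1/(2β)) / (2β(−log η)^(1/(2β))), where η = exp(−(1/(2σ²))·((C−λ)/(H+β))^(2(H+β))·(b/(1−(H+β)))^(2−2(H+β))). -/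
open Real Set MeasureTheory ProbabilityTheory
open scoped NNReal ENNReal

/-- Chernoff-type tail bound for a centered Gaussian. -/
lemma gaussian_tail_bound {v : ℝ≥0} (hv : v ≠ 0) {c : ℝ} (hc : 0 ≤ c) :
    gaussianReal 0 v (Set.Ioi c) ≤ ENNReal.ofReal (Real.exp (-(c ^ 2) / (2 * (v : ℝ)))) := by
  have hvpos : (0 : ℝ) < v := by
    have := hv.bot_lt
    exact_mod_cast this
  have h2v : (0 : ℝ) < 2 * v := by linarith
  rw [gaussianReal_apply 0 hv]
  calc ∫⁻ x in Ioi c, gaussianPDF 0 v x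
      ≤ ∫⁻ x in Ioi c,
          ENNReal.ofReal (Real.exp (-(c ^ 2) / (2 * (v : ℝ)))) * gaussianPDF c v x := by
        refine setLIntegral_mono (measurable_const.mul (measurable_gaussianPDF c v)) ?_
        intro x hx
        have hcx : c < x := hx
        rw [gaussianPDF, gaussianPDF, ← ENNReal.ofReal_mul (by positivity)]
        apply ENNReal.ofReal_le_ofReal
        rw [gaussianPDFReal, gaussianPDFReal]
        have key : Real.exp (-(x - 0) ^ 2 / (2 * (v : ℝ)))
            ≤ Real.exp (-(c ^ 2) / (2 * (v : ℝ))) * Real.exp (-(x - c) ^ 2 / (2 * (v : ℝ))) := by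
          rw [← Real.exp_add]
          apply Real.exp_le_exp.mpr
          rw [← add_div, div_le_div_iff₀ h2v h2v]
          nlinarith [mul_nonneg (mul_nonneg hc (sub_nonneg.mpr hcx.le)) h2v.le]
        calc (Real.sqrt (2 * π * v))⁻¹ * Real.exp (-(x - 0) ^ 2 / (2 * (v : ℝ)))
            ≤ (Real.sqrt (2 * π * v))⁻¹ *
              (Real.exp (-(c ^ 2) / (2 * (v : ℝ))) * Real.exp (-(x - c) ^ 2 / (2 * (v : ℝ)))) := by
              apply mul_le_mul_of_nonneg_left key (by positivity)
          _ = Real.exp (-(c ^ 2) / (2 * (v : ℝ))) *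
              ((Real.sqrt (2 * π * v))⁻¹ * Real.exp (-(x - c) ^ 2 / (2 * (v : ℝ)))) := by ring
    _ = ENNReal.ofReal (Real.exp (-(c ^ 2) / (2 * (v : ℝ)))) *
          ∫⁻ x in Ioi c, gaussianPDF c v x :=
        lintegral_const_mul _ (measurable_gaussianPDF c v)
    _ ≤ ENNReal.ofReal (Real.exp (-(c ^ 2) / (2 * (v : ℝ)))) * ∫⁻ x, gaussianPDF c v x :=
        mul_le_mul_right (setLIntegral_le_lintegral _ _) _
    _ = ENNReal.ofReal (Real.exp (-(c ^ 2) / (2 * (v : ℝ)))) := by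
        rw [lintegral_gaussianPDF_eq_one c hv, mul_one]

/-- Value of the stretched-exponential integral. -/
lemma integral_stretched_exp {K p : ℝ} (hK : 0 < K) (hp : 0 < p) :
    ∫ x in Ioi (0 : ℝ), Real.exp (-K * x ^ p) =
      Real.Gamma (1 / p) / (p * K ^ (1 / p)) := by
  have h1 : (0 : ℝ) < K ^ (1 / p) := Real.rpow_pos_of_pos hK _
  rw [integral_exp_neg_mul_rpow hp hK, Real.Gamma_add_one (one_div_ne_zero hp.ne'),
    show (-1 : ℝ) / p = -(1 / p) by ring, Real.rpow_neg hK.le,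
    eq_div_iff (by positivity : p * K ^ (1 / p) ≠ 0)]
  field_simp

/-- Integrability of the stretched exponential on `(0, ∞)` for any `p > 0`. -/
lemma integrableOn_stretched_exp {K p : ℝ} (hK : 0 < K) (hp : 0 < p) :
    IntegrableOn (fun x : ℝ => Real.exp (-K * x ^ p)) (Ioi (0 : ℝ)) := by
  have hp' : (0 : ℝ) < p⁻¹ := by positivity
  refine (integrableOn_Ioi_comp_rpow_iff (fun x : ℝ => Real.exp (-K * x ^ p)) hp'.ne').mp ?_
  have h1 : IntegrableOn (fun x : ℝ => x ^ (p⁻¹ - 1) * Real.exp (-K * x ^ (1 : ℝ)))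
      (Ioi (0 : ℝ)) :=
    integrableOn_rpow_mul_exp_neg_mul_rpow (by linarith) one_pos hK
  have h2 : IntegrableOn (fun x : ℝ => |p⁻¹| * (x ^ (p⁻¹ - 1) * Real.exp (-K * x ^ (1 : ℝ))))
      (Ioi (0 : ℝ)) := h1.const_mul |p⁻¹|
  refine IntegrableOn.congr_fun h2 ?_ measurableSet_Ioi
  intro x hx
  have hx0 : (0 : ℝ) < x := hx
  have hxp : (x ^ (p⁻¹ : ℝ)) ^ p = x := by
    rw [← Real.rpow_mul hx0.le, inv_mul_cancel₀ hp.ne', Real.rpow_one]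
  simp only [smul_eq_mul, Real.rpow_one, hxp]
  ring

set_option maxHeartbeats 4000000 in
theorem fbm_backlog_bound {Ω : Type*} [MeasurableSpace Ω] (μ : Measure Ω)
    [IsProbabilityMeasure μ] (A Z : ℕ → Ω → ℝ) (lam σ C H β b : ℝ)
    (hσ : 0 < σ) (hC : lam < C) (hH : H ∈ Set.Ioo (1/2 : ℝ) 1)
    (hβ : β ∈ Set.Ioo (0:ℝ) (1 - H)) (hb : 0 < b)
    (hA0 : ∀ ω, A 0 ω = 0)
    (hA : ∀ τ : ℕ, ∀ ω, A τ ω = lam * τ + Z τ ω)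
    (hZ : ∀ τ : ℕ, 1 ≤ τ →
      Measure.map (Z τ) μ = gaussianReal 0 (Real.toNNReal (σ ^ 2 * (τ : ℝ) ^ (2 * H)))) :
    let η := Real.exp (-(1 / (2 * σ ^ 2)) * ((C - lam) / (H + β)) ^ (2 * (H + β)) *
      (b / (1 - (H + β))) ^ (2 - 2 * (H + β)))
    μ {ω | ∃ τ : ℕ, A τ ω - C * τ > b} ≤
      ENNReal.ofReal (Real.Gamma (1 / (2 * β)) / (2 * β * (-Real.log η) ^ (1 / (2 * β)))) := by
  intro η
  obtain ⟨hH1, hH2⟩ := hH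
  obtain ⟨hβ0, hβ1⟩ := hβ
  have hα0 : (0 : ℝ) < H + β := by linarith
  have hα1 : H + β < 1 := by linarith
  have hα1' : (0 : ℝ) < 1 - (H + β) := by linarith
  have hCl : (0 : ℝ) < C - lam := by linarith
  set K : ℝ := 1 / (2 * σ ^ 2) * ((C - lam) / (H + β)) ^ (2 * (H + β)) *
      (b / (1 - (H + β))) ^ (2 - 2 * (H + β)) with hKdef
  have hK : 0 < K := by
    rw [hKdef]
    have h1 : (0 : ℝ) < ((C - lam) / (H + β)) ^ (2 * (H + β)) :=
      Real.rpow_pos_of_pos (by positivity) _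
    have h2 : (0 : ℝ) < (b / (1 - (H + β))) ^ (2 - 2 * (H + β)) :=
      Real.rpow_pos_of_pos (by positivity) _
    positivity
  have hηdef : η = Real.exp (-K) := by
    show Real.exp _ = Real.exp (-K)
    rw [hKdef]; ring_nf
  have hlogη : -Real.log η = K := by rw [hηdef, Real.log_exp, neg_neg]
  rw [hlogη]
  -- the exponent bound from the weighted AM-GM inequality
  have hexp : ∀ n : ℕ, 1 ≤ n →
      K * (n : ℝ) ^ (2 * β) ≤ (b + (C - lam) * n) ^ 2 / (2 * (σ ^ 2 * (n : ℝ) ^ (2 * H))) := by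
    intro n hn
    have hn1 : (1 : ℝ) ≤ (n : ℝ) := by exact_mod_cast hn
    have hnpos : (0 : ℝ) < (n : ℝ) := by linarith
    set p₁ : ℝ := (C - lam) / (H + β) * n with hp₁def
    set p₂ : ℝ := b / (1 - (H + β)) with hp₂def
    have hp₁ : 0 ≤ p₁ := by positivity
    have hp₂ : 0 ≤ p₂ := by positivity
    have hAM : p₁ ^ (H + β) * p₂ ^ (1 - (H + β)) ≤ b + (C - lam) * n := by
      have h := Real.geom_mean_le_arith_mean2_weighted hα0.le hα1'.le hp₁ hp₂ (by ring)
      have he : (H + β) * p₁ + (1 - (H + β)) * p₂ = b + (C - lam) * n := by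
        rw [hp₁def, hp₂def]
        field_simp
        ring
      linarith [h, he.le]
    have hM0 : 0 ≤ p₁ ^ (H + β) * p₂ ^ (1 - (H + β)) := by positivity
    have hMsq : (p₁ ^ (H + β) * p₂ ^ (1 - (H + β))) ^ 2 =
        ((C - lam) / (H + β)) ^ (2 * (H + β)) * p₂ ^ (2 - 2 * (H + β)) *
          (n : ℝ) ^ (2 * (H + β)) := by
      rw [mul_pow, ← Real.rpow_natCast (p₁ ^ (H + β)) 2, ← Real.rpow_natCast (p₂ ^ (1 - (H + β))) 2,
        ← Real.rpow_mul hp₁, ← Real.rpow_mul hp₂,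
        show (H + β) * ((2 : ℕ) : ℝ) = 2 * (H + β) by push_cast; ring,
        show (1 - (H + β)) * ((2 : ℕ) : ℝ) = 2 - 2 * (H + β) by push_cast; ring,
        hp₁def, Real.mul_rpow (by positivity) hnpos.le]
      ring
    have hsplit : (n : ℝ) ^ (2 * (H + β)) = (n : ℝ) ^ (2 * β) * (n : ℝ) ^ (2 * H) := by
      rw [← Real.rpow_add hnpos]; ring_nf
    have h2H : (0 : ℝ) < (n : ℝ) ^ (2 * H) := Real.rpow_pos_of_pos hnpos _
    have hstep : K * (n : ℝ) ^ (2 * β) =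
        (p₁ ^ (H + β) * p₂ ^ (1 - (H + β))) ^ 2 / (2 * (σ ^ 2 * (n : ℝ) ^ (2 * H))) := by
      rw [hMsq, hsplit, hKdef, hp₂def]
      field_simp
    rw [hstep]
    have hsq : (p₁ ^ (H + β) * p₂ ^ (1 - (H + β))) ^ 2 ≤ (b + (C - lam) * n) ^ 2 := by
      nlinarith
    exact div_le_div_of_nonneg_right hsq (by positivity)
  -- per-time-slot tail bound
  have htail : ∀ n : ℕ, 1 ≤ n →
      μ {ω | A n ω - C * n > b} ≤ ENNReal.ofReal (Real.exp (-K * (n : ℝ) ^ (2 * β))) := by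
    intro n hn
    have hn1 : (1 : ℝ) ≤ (n : ℝ) := by exact_mod_cast hn
    have hnpos : (0 : ℝ) < (n : ℝ) := by linarith
    have hvpos : (0 : ℝ) < σ ^ 2 * (n : ℝ) ^ (2 * H) := by
      have := Real.rpow_pos_of_pos hnpos (2 * H); positivity
    set v : ℝ≥0 := Real.toNNReal (σ ^ 2 * (n : ℝ) ^ (2 * H)) with hvdef
    have hvne : v ≠ 0 := by
      rw [hvdef]
      simp [Real.toNNReal_eq_zero, not_le, hvpos]
    have hvco : (v : ℝ) = σ ^ 2 * (n : ℝ) ^ (2 * H) := Real.coe_toNNReal _ hvpos.le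
    set c : ℝ := b + (C - lam) * n with hcdef
    have hc0 : 0 ≤ c := by positivity
    have hset : {ω | A n ω - C * n > b} = Z n ⁻¹' Set.Ioi c := by
      ext ω
      simp only [Set.mem_setOf_eq, Set.mem_preimage, Set.mem_Ioi, hA n ω, hcdef]
      constructor <;> intro h <;> nlinarith
    have hmap := hZ n hn
    have haem : AEMeasurable (Z n) μ := by
      by_contra hcontra
      rw [Measure.map_of_not_aemeasurable hcontra] at hmap
      have : (0 : Measure ℝ) Set.univ = gaussianReal 0 v Set.univ := by rw [hmap, hvdef]
      simp [measure_univ] at this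
    have hμeq : μ {ω | A n ω - C * n > b} = gaussianReal 0 v (Set.Ioi c) := by
      rw [hset, ← Measure.map_apply_of_aemeasurable haem measurableSet_Ioi, hmap, hvdef]
    rw [hμeq]
    refine (gaussian_tail_bound hvne hc0).trans ?_
    apply ENNReal.ofReal_le_ofReal
    apply Real.exp_le_exp.mpr
    have h1 := hexp n hn
    rw [hvco]
    have : K * (n : ℝ) ^ (2 * β) ≤ c ^ 2 / (2 * (σ ^ 2 * (n : ℝ) ^ (2 * H))) := by
      rw [hcdef]; exact h1
    calc -(c ^ 2) / (2 * (σ ^ 2 * (n : ℝ) ^ (2 * H)))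
        = -(c ^ 2 / (2 * (σ ^ 2 * (n : ℝ) ^ (2 * H)))) := by ring
      _ ≤ -(K * (n : ℝ) ^ (2 * β)) := by linarith
      _ = -K * (n : ℝ) ^ (2 * β) := by ring
  -- the series bound via integral comparison
  set f : ℝ → ℝ := fun x => Real.exp (-K * x ^ (2 * β)) with hfdef
  have h2β : (0 : ℝ) < 2 * β := by linarith
  have hI_int : IntegrableOn f (Ioi (0 : ℝ)) := integrableOn_stretched_exp hK h2β
  have hI_val : ∫ x in Ioi (0 : ℝ), f x =
      Real.Gamma (1 / (2 * β)) / (2 * β * K ^ (1 / (2 * β))) :=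
    integral_stretched_exp hK h2β
  have hf_nonneg : ∀ x : ℝ, 0 ≤ f x := fun x => (Real.exp_pos _).le
  have hsum_le : ∀ N : ℕ, ∑ i ∈ Finset.range N, f ((i : ℝ) + 1) ≤
      Real.Gamma (1 / (2 * β)) / (2 * β * K ^ (1 / (2 * β))) := by
    intro N
    have hant : AntitoneOn f (Icc (0 : ℝ) (0 + N)) := by
      intro x hx y hy hxy
      simp only [hfdef]
      apply Real.exp_le_exp.mpr
      have h := Real.rpow_le_rpow hx.1 hxy h2β.le
      nlinarith
    have h1 := hant.sum_le_integral
    have h2 : ∑ i ∈ Finset.range N, f ((i : ℝ) + 1) =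
        ∑ i ∈ Finset.range N, f ((0 : ℝ) + ((i + 1 : ℕ) : ℝ)) := by
      apply Finset.sum_congr rfl
      intro i _
      push_cast
      ring_nf
    rw [h2]
    refine h1.trans ?_
    rw [intervalIntegral.integral_of_le (by positivity : (0:ℝ) ≤ 0 + N)]
    calc ∫ x in Ioc (0:ℝ) (0 + N), f x ≤ ∫ x in Ioi (0:ℝ), f x := by
          apply setIntegral_mono_set hI_int (Filter.Eventually.of_forall hf_nonneg)
          exact Filter.Eventually.of_forall (fun x hx => hx.1)
      _ = _ := hI_val
  have hsummable : Summable (fun i : ℕ => f ((i : ℝ) + 1)) :=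
    summable_of_sum_range_le (fun n => hf_nonneg _) hsum_le
  have htsum_le : ∑' i : ℕ, f ((i : ℝ) + 1) ≤
      Real.Gamma (1 / (2 * β)) / (2 * β * K ^ (1 / (2 * β))) :=
    Real.tsum_le_of_sum_range_le (fun n => hf_nonneg _) hsum_le
  -- put everything together
  have hU : {ω | ∃ τ : ℕ, A τ ω - C * τ > b} = ⋃ τ : ℕ, {ω | A τ ω - C * τ > b} := by
    ext ω; simp [Set.mem_iUnion]
  calc μ {ω | ∃ τ : ℕ, A τ ω - C * τ > b}
      ≤ ∑' τ : ℕ, μ {ω | A τ ω - C * τ > b} := by rw [hU]; exact measure_iUnion_le _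
    _ = μ {ω | A 0 ω - C * (0:ℕ) > b} + ∑' τ : ℕ, μ {ω | A (τ+1) ω - C * (τ+1 : ℕ) > b} := by
        rw [tsum_eq_zero_add' ENNReal.summable]
    _ ≤ 0 + ∑' τ : ℕ, ENNReal.ofReal (f ((τ : ℝ) + 1)) := by
        gcongr with τ
        · have : {ω | A 0 ω - C * (0:ℕ) > b} = (∅ : Set Ω) := by
            ext ω
            simp only [Set.mem_setOf_eq, hA0 ω, Nat.cast_zero, mul_zero, sub_zero,
              Set.mem_empty_iff_false, iff_false, not_lt]
            exact hb.le
          rw [this, measure_empty]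
        · have h := htail (τ + 1) (Nat.le_add_left 1 τ)
          refine h.trans_eq ?_
          congr 1
          simp only [hfdef]
          push_cast
          ring_nf
    _ = ∑' τ : ℕ, ENNReal.ofReal (f ((τ : ℝ) + 1)) := by rw [zero_add]
    _ = ENNReal.ofReal (∑' τ : ℕ, f ((τ : ℝ) + 1)) :=
        (ENNReal.ofReal_tsum_of_nonneg (fun n => hf_nonneg _) hsummable).symm
    _ ≤ ENNReal.ofReal (Real.Gamma (1 / (2 * β)) / (2 * β * K ^ (1 / (2 * β)))) :=
        ENNReal.ofReal_le_ofReal htsum_le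
end

section
/- Let r > λ ≥ 0, σ > 0, H ∈ (1/2,1), β ∈ (0,1−H), and let ϑ = (1/(2σ²))·((r−λ)/(H+β))^(2(H+β))·(1/(1−(H+β)))^(2−2(H+β)). For the fBm process (A(τ))_{τ∈ℕ} with Gaussian marginals Z(τ) ~ N(0,σ²τ^(2H)), and any b > 0: P[sup_{τ≥0}(A(τ) − rτ) > b] ≤ Γ(1/(2β)) / (2β ϑ^(1/(2β))) · b^(−(1−(H+β))/β). -/
open Real Set MeasureTheory ProbabilityTheory
open scoped NNReal ENNReal

lemma fbm_sq_rpow {x : ℝ} (hx : 0 < x) (e : ℝ) : (x ^ e) ^ 2 = x ^ (2 * e) := by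
  rw [sq, ← Real.rpow_add hx, two_mul]

lemma fbm_gauss_tail {v : ℝ≥0} (hv : v ≠ 0) {x : ℝ} (hx : 0 ≤ x) :
    gaussianReal 0 v (Ioi x) ≤ ENNReal.ofReal (Real.exp (-x ^ 2 / (2 * (v : ℝ)))) := by
  have hv' : (0 : ℝ) < v := by
    have := (pos_iff_ne_zero (a := v)).mpr hv
    exact_mod_cast this
  rw [gaussianReal_apply 0 hv]
  have h1 : ∀ y ∈ Ioi x, gaussianPDF 0 v y ≤
      ENNReal.ofReal (Real.exp (-x ^ 2 / (2 * (v : ℝ)))) * gaussianPDF x v y := by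
    intro y hy
    have hy' : x < y := hy
    simp only [gaussianPDF_def]
    rw [← ENNReal.ofReal_mul (Real.exp_nonneg _)]
    apply ENNReal.ofReal_le_ofReal
    simp only [gaussianPDFReal_def]
    have hsq : (0 : ℝ) ≤ (Real.sqrt (2 * π * v))⁻¹ := by positivity
    have hexp : Real.exp (-(y - 0) ^ 2 / (2 * (v : ℝ))) ≤
        Real.exp (-x ^ 2 / (2 * (v : ℝ))) * Real.exp (-(y - x) ^ 2 / (2 * (v : ℝ))) := by
      rw [← Real.exp_add]
      apply Real.exp_le_exp.mpr
      rw [← add_div]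
      gcongr
      · nlinarith [mul_nonneg hx (sub_nonneg.mpr hy'.le)]
    calc (Real.sqrt (2 * π * v))⁻¹ * Real.exp (-(y - 0) ^ 2 / (2 * (v : ℝ)))
        ≤ (Real.sqrt (2 * π * v))⁻¹ * (Real.exp (-x ^ 2 / (2 * (v : ℝ))) *
          Real.exp (-(y - x) ^ 2 / (2 * (v : ℝ)))) := by
          exact mul_le_mul_of_nonneg_left hexp hsq
      _ = Real.exp (-x ^ 2 / (2 * (v : ℝ))) *
          ((Real.sqrt (2 * π * v))⁻¹ * Real.exp (-(y - x) ^ 2 / (2 * (v : ℝ)))) := by ring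
  calc ∫⁻ y in Ioi x, gaussianPDF 0 v y
      ≤ ∫⁻ y in Ioi x, ENNReal.ofReal (Real.exp (-x ^ 2 / (2 * (v : ℝ)))) * gaussianPDF x v y :=
        setLIntegral_mono ((measurable_gaussianPDF x v).const_mul _) h1
    _ = ENNReal.ofReal (Real.exp (-x ^ 2 / (2 * (v : ℝ)))) * ∫⁻ y in Ioi x, gaussianPDF x v y :=
        lintegral_const_mul _ (measurable_gaussianPDF x v)
    _ ≤ ENNReal.ofReal (Real.exp (-x ^ 2 / (2 * (v : ℝ)))) * 1 := by
        gcongr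
        calc ∫⁻ y in Ioi x, gaussianPDF x v y ≤ ∫⁻ y, gaussianPDF x v y :=
              setLIntegral_le_lintegral _ _
          _ = 1 := lintegral_gaussianPDF_eq_one x hv
    _ = ENNReal.ofReal (Real.exp (-x ^ 2 / (2 * (v : ℝ)))) := mul_one _

lemma fbm_exp_rpow_integrableOn {a p : ℝ} (ha : 0 < a) (hp : 0 < p) :
    IntegrableOn (fun t : ℝ => Real.exp (-(a * t ^ p))) (Ioi (0 : ℝ)) := by
  have h1 : IntegrableOn (fun y : ℝ => Real.exp (-y) * y ^ (1 / p - 1)) (Ioi 0) :=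
    Real.GammaIntegral_convergent (by positivity)
  have h2 : IntegrableOn (fun y : ℝ => Real.exp (-(a * y)) * (a * y) ^ (1 / p - 1)) (Ioi 0) := by
    have h := (integrableOn_Ioi_comp_mul_left_iff
      (fun y : ℝ => Real.exp (-y) * y ^ (1 / p - 1)) 0 ha).mpr
    rw [mul_zero] at h
    exact h h1
  have h3 : IntegrableOn (fun y : ℝ =>
      a ^ (1 / p - 1) * (Real.exp (-(a * y)) * y ^ (1 / p - 1))) (Ioi 0) := by
    apply h2.congr_fun ?_ measurableSet_Ioi
    intro y hy
    show Real.exp (-(a * y)) * (a * y) ^ (1 / p - 1) =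
      a ^ (1 / p - 1) * (Real.exp (-(a * y)) * y ^ (1 / p - 1))
    rw [Real.mul_rpow ha.le (le_of_lt hy)]
    ring
  have h4 : IntegrableOn (fun y : ℝ => Real.exp (-(a * y)) * y ^ (1 / p - 1)) (Ioi 0) := by
    have h5 := h3.const_mul ((a ^ (1 / p - 1))⁻¹)
    refine MeasureTheory.IntegrableOn.congr_fun h5 ?_ measurableSet_Ioi
    intro y hy
    show (a ^ (1 / p - 1))⁻¹ * (a ^ (1 / p - 1) * (Real.exp (-(a * y)) * y ^ (1 / p - 1))) = _
    rw [inv_mul_cancel_left₀ (by positivity : (a:ℝ) ^ (1 / p - 1) ≠ 0)]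
  have h6 := (integrableOn_Ioi_comp_rpow_iff'
    (fun y : ℝ => Real.exp (-(a * y)) * y ^ (1 / p - 1)) hp.ne').mpr h4
  apply h6.congr_fun ?_ measurableSet_Ioi
  intro x hx
  have hx' : (0 : ℝ) < x := hx
  simp only [smul_eq_mul]
  rw [← Real.rpow_mul hx'.le, show p * (1 / p - 1) = 1 - p by
    rw [mul_sub, mul_one_div, div_self hp.ne', mul_one]]
  rw [show x ^ (p - 1) * (Real.exp (-(a * x ^ p)) * x ^ (1 - p)) =
    x ^ (p - 1) * x ^ (1 - p) * Real.exp (-(a * x ^ p)) by ring,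
    ← Real.rpow_add hx', show p - 1 + (1 - p) = 0 by ring, Real.rpow_zero, one_mul]

lemma fbm_exp_rpow_integral {a p : ℝ} (ha : 0 < a) (hp : 0 < p) :
    ∫ t in Ioi (0 : ℝ), Real.exp (-(a * t ^ p)) =
      (1 / a) ^ (1 / p) * Real.Gamma (1 / p) / p := by
  have key : (∫ x in Ioi (0 : ℝ), (p * x ^ (p - 1)) •
        (p⁻¹ * ((x ^ p) ^ (1 / p - 1) * Real.exp (-(a * (x ^ p)))))) =
      ∫ y in Ioi (0 : ℝ), p⁻¹ * (y ^ (1 / p - 1) * Real.exp (-(a * y))) :=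
    integral_comp_rpow_Ioi_of_pos
      (g := fun y => p⁻¹ * (y ^ (1 / p - 1) * Real.exp (-(a * y)))) hp
  have hL : (∫ x in Ioi (0 : ℝ), (p * x ^ (p - 1)) •
        (p⁻¹ * ((x ^ p) ^ (1 / p - 1) * Real.exp (-(a * (x ^ p)))))) =
      ∫ t in Ioi (0 : ℝ), Real.exp (-(a * t ^ p)) := by
    apply setIntegral_congr_fun measurableSet_Ioi
    intro x hx
    have hx' : (0 : ℝ) < x := hx
    simp only [smul_eq_mul]
    rw [← Real.rpow_mul hx'.le, show p * (1 / p - 1) = 1 - p by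
      rw [mul_sub, mul_one_div, div_self hp.ne', mul_one]]
    have h1 : x ^ (p - 1) * x ^ (1 - p) = 1 := by
      rw [← Real.rpow_add hx', show p - 1 + (1 - p) = 0 by ring, Real.rpow_zero]
    calc p * x ^ (p - 1) * (p⁻¹ * (x ^ (1 - p) * Real.exp (-(a * x ^ p))))
        = p * p⁻¹ * (x ^ (p - 1) * x ^ (1 - p)) * Real.exp (-(a * x ^ p)) := by ring
      _ = Real.exp (-(a * x ^ p)) := by
          rw [mul_inv_cancel₀ hp.ne', h1, one_mul, one_mul]
  calc ∫ t in Ioi (0 : ℝ), Real.exp (-(a * t ^ p))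
      = ∫ x in Ioi (0 : ℝ), (p * x ^ (p - 1)) •
          (p⁻¹ * ((x ^ p) ^ (1 / p - 1) * Real.exp (-(a * (x ^ p))))) := hL.symm
    _ = ∫ y in Ioi (0 : ℝ), p⁻¹ * (y ^ (1 / p - 1) * Real.exp (-(a * y))) := key
    _ = p⁻¹ * ∫ y in Ioi (0 : ℝ), y ^ (1 / p - 1) * Real.exp (-(a * y)) :=
        integral_const_mul _ _
    _ = p⁻¹ * ((1 / a) ^ (1 / p) * Real.Gamma (1 / p)) := by
        rw [Real.integral_rpow_mul_exp_neg_mul_Ioi (by positivity) ha]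
    _ = (1 / a) ^ (1 / p) * Real.Gamma (1 / p) / p := by ring

theorem fbm_affine_envelope {Ω : Type*} [MeasurableSpace Ω] (μ : Measure Ω)
    [IsProbabilityMeasure μ] (A Z : ℕ → Ω → ℝ) (lam σ r H β b : ℝ)
    (hlam : 0 ≤ lam) (hσ : 0 < σ) (hr : lam < r) (hH : H ∈ Set.Ioo (1/2 : ℝ) 1)
    (hβ : β ∈ Set.Ioo (0:ℝ) (1 - H)) (hb : 0 < b)
    (hA0 : ∀ ω, A 0 ω = 0)
    (hA : ∀ τ : ℕ, ∀ ω, A τ ω = lam * τ + Z τ ω)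
    (hZ : ∀ τ : ℕ, 1 ≤ τ →
      Measure.map (Z τ) μ = gaussianReal 0 (Real.toNNReal (σ ^ 2 * (τ : ℝ) ^ (2 * H)))) :
    let ϑ := (1 / (2 * σ ^ 2)) * ((r - lam) / (H + β)) ^ (2 * (H + β)) *
      (1 / (1 - (H + β))) ^ (2 - 2 * (H + β))
    μ {ω | ∃ τ : ℕ, A τ ω - r * τ > b} ≤
      ENNReal.ofReal (Real.Gamma (1 / (2 * β)) / (2 * β * ϑ ^ (1 / (2 * β))) *
        b ^ (-(1 - (H + β)) / β)) := by
  intro ϑ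
  obtain ⟨hH1, hH2⟩ := hH
  obtain ⟨hβ1, hβ2⟩ := hβ
  have hϑdef : ϑ = (1 / (2 * σ ^ 2)) * ((r - lam) / (H + β)) ^ (2 * (H + β)) *
      (1 / (1 - (H + β))) ^ (2 - 2 * (H + β)) := rfl
  have hs0 : 0 < H + β := by linarith
  have hs1 : H + β < 1 := by linarith
  have h1s : 0 < 1 - (H + β) := by linarith
  have hc : 0 < r - lam := sub_pos.mpr hr
  have hϑpos : 0 < ϑ := by rw [hϑdef]; positivity
  set a : ℝ := ϑ * b ^ (2 * (1 - (H + β))) with hadef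
  have ha : 0 < a := by positivity
  set p : ℝ := 2 * β with hpdef
  have hp : 0 < p := by positivity
  -- the key deterministic inequality
  have hkey : ∀ t : ℝ, 0 < t →
      a * t ^ p * (2 * (σ ^ 2 * t ^ (2 * H))) ≤ (b + (r - lam) * t) ^ 2 := by
    intro t ht
    have hcts : 0 < (r - lam) * t / (H + β) := by positivity
    have hb1s : 0 < b / (1 - (H + β)) := by positivity
    have hG : ((r - lam) * t / (H + β)) ^ (H + β) * (b / (1 - (H + β))) ^ (1 - (H + β)) ≤
        b + (r - lam) * t := by
      calc ((r - lam) * t / (H + β)) ^ (H + β) * (b / (1 - (H + β))) ^ (1 - (H + β))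
          ≤ (H + β) * ((r - lam) * t / (H + β)) +
            (1 - (H + β)) * (b / (1 - (H + β))) :=
            Real.geom_mean_le_arith_mean2_weighted hs0.le h1s.le hcts.le hb1s.le (by ring)
        _ = b + (r - lam) * t := by
            field_simp
            ring
    have hGsq := pow_le_pow_left₀ (by positivity) hG 2
    have ht1 : t ^ p * t ^ (2 * H) = t ^ (2 * (H + β)) := by
      rw [hpdef, ← Real.rpow_add ht]
      congr 1
      ring
    have hG2 : (((r - lam) * t / (H + β)) ^ (H + β) * (b / (1 - (H + β))) ^ (1 - (H + β))) ^ 2 =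
        ((r - lam) / (H + β)) ^ (2 * (H + β)) * t ^ (2 * (H + β)) *
          (b ^ (2 * (1 - (H + β))) * (1 / (1 - (H + β))) ^ (2 * (1 - (H + β)))) := by
      rw [mul_pow, fbm_sq_rpow hcts (H + β), fbm_sq_rpow hb1s (1 - (H + β)),
        show (r - lam) * t / (H + β) = ((r - lam) / (H + β)) * t by ring,
        show b / (1 - (H + β)) = b * (1 / (1 - (H + β))) by ring,
        Real.mul_rpow (by positivity) ht.le, Real.mul_rpow hb.le (by positivity)]
    have hEq : a * t ^ p * (2 * (σ ^ 2 * t ^ (2 * H))) =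
        ((r - lam) / (H + β)) ^ (2 * (H + β)) * t ^ (2 * (H + β)) *
          (b ^ (2 * (1 - (H + β))) * (1 / (1 - (H + β))) ^ (2 * (1 - (H + β)))) := by
      rw [hadef, hϑdef, show (2 : ℝ) - 2 * (H + β) = 2 * (1 - (H + β)) by ring, ← ht1]
      field_simp
    rw [hEq, ← hG2]
    exact hGsq
  -- per-τ probability bound
  have hτbound : ∀ τ : ℕ, 1 ≤ τ →
      μ {ω | A τ ω - r * τ > b} ≤ ENNReal.ofReal (Real.exp (-(a * (τ : ℝ) ^ p))) := by
    intro τ hτ1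
    have hτpos : (0 : ℝ) < τ := by exact_mod_cast hτ1
    have hxpos : (0 : ℝ) < b + (r - lam) * τ := by positivity
    have hvnn : (0 : ℝ) ≤ σ ^ 2 * (τ : ℝ) ^ (2 * H) := by positivity
    have hvR : ((Real.toNNReal (σ ^ 2 * (τ : ℝ) ^ (2 * H))) : ℝ) =
        σ ^ 2 * (τ : ℝ) ^ (2 * H) := Real.coe_toNNReal _ hvnn
    have hvpos : (0 : ℝ) < ((Real.toNNReal (σ ^ 2 * (τ : ℝ) ^ (2 * H))) : ℝ) := by
      rw [hvR]; positivity
    have hvne : Real.toNNReal (σ ^ 2 * (τ : ℝ) ^ (2 * H)) ≠ 0 :=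
      (NNReal.coe_pos.mp hvpos).ne'
    have hmapZ := hZ τ hτ1
    have hZae : AEMeasurable (Z τ) μ := by
      by_contra h
      rw [Measure.map_of_not_aemeasurable h] at hmapZ
      have h1 : (gaussianReal 0 (Real.toNNReal (σ ^ 2 * (τ : ℝ) ^ (2 * H)))) univ = 1 :=
        measure_univ
      rw [← hmapZ] at h1
      simp at h1
    have hsetτ : {ω | A τ ω - r * τ > b} = Z τ ⁻¹' (Ioi (b + (r - lam) * τ)) := by
      ext ω
      simp only [Set.mem_setOf_eq, Set.mem_preimage, Set.mem_Ioi, hA τ ω]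
      constructor <;> intro h <;> linarith
    calc μ {ω | A τ ω - r * τ > b}
        = (μ.map (Z τ)) (Ioi (b + (r - lam) * τ)) := by
          rw [hsetτ, Measure.map_apply_of_aemeasurable hZae measurableSet_Ioi]
      _ = gaussianReal 0 (Real.toNNReal (σ ^ 2 * (τ : ℝ) ^ (2 * H)))
            (Ioi (b + (r - lam) * τ)) := by rw [hmapZ]
      _ ≤ ENNReal.ofReal (Real.exp (-(b + (r - lam) * τ) ^ 2 /
            (2 * ((Real.toNNReal (σ ^ 2 * (τ : ℝ) ^ (2 * H))) : ℝ)))) :=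
          fbm_gauss_tail hvne hxpos.le
      _ ≤ ENNReal.ofReal (Real.exp (-(a * (τ : ℝ) ^ p))) := by
          apply ENNReal.ofReal_le_ofReal
          apply Real.exp_le_exp.mpr
          rw [hvR, neg_div]
          apply neg_le_neg
          rw [le_div_iff₀ (by positivity)]
          exact hkey τ hτpos
  -- measurability of the integrand
  have hFm : Measurable fun t : ℝ => ENNReal.ofReal (Real.exp (-(a * t ^ p))) := by
    apply Measurable.ennreal_ofReal
    exact (Real.measurable_exp.comp (((measurable_id.pow_const p).const_mul a).neg))
  -- τ = 0 term vanishes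
  have hS0 : μ {ω | A 0 ω - r * ((0 : ℕ) : ℝ) > b} = 0 := by
    have : {ω | A 0 ω - r * ((0 : ℕ) : ℝ) > b} = (∅ : Set Ω) := by
      ext ω
      simp only [Set.mem_setOf_eq, Set.mem_empty_iff_false, iff_false, not_lt, hA0 ω]
      push_cast
      linarith
    rw [this, measure_empty]
  -- per-n comparison with the integral over Ioc n (n+1)
  have hterm : ∀ n : ℕ, μ {ω | A (n + 1) ω - r * ((n + 1 : ℕ) : ℝ) > b} ≤
      ∫⁻ t in Ioc (n : ℝ) ((n : ℝ) + 1), ENNReal.ofReal (Real.exp (-(a * t ^ p))) := by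
    intro n
    have h1 := hτbound (n + 1) (Nat.le_add_left 1 n)
    have hcast : (((n + 1 : ℕ)) : ℝ) = (n : ℝ) + 1 := by push_cast; ring
    calc μ {ω | A (n + 1) ω - r * ((n + 1 : ℕ) : ℝ) > b}
        ≤ ENNReal.ofReal (Real.exp (-(a * (((n + 1 : ℕ)) : ℝ) ^ p))) := h1
      _ = ∫⁻ _ in Ioc (n : ℝ) ((n : ℝ) + 1),
            ENNReal.ofReal (Real.exp (-(a * (((n + 1 : ℕ)) : ℝ) ^ p))) := by
          rw [setLIntegral_const, Real.volume_Ioc]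
          norm_num
      _ ≤ ∫⁻ t in Ioc (n : ℝ) ((n : ℝ) + 1), ENNReal.ofReal (Real.exp (-(a * t ^ p))) := by
          apply setLIntegral_mono hFm
          intro t ht
          apply ENNReal.ofReal_le_ofReal
          apply Real.exp_le_exp.mpr
          have h0t : 0 ≤ t := le_trans (Nat.cast_nonneg n) ht.1.le
          have htp : t ^ p ≤ (((n + 1 : ℕ)) : ℝ) ^ p :=
            Real.rpow_le_rpow h0t (by rw [hcast]; exact ht.2) hp.le
          exact neg_le_neg (mul_le_mul_of_nonneg_left htp ha.le)
  -- partial sums of the integrals are bounded by the integral over Ioi 0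
  have hsum : ∀ n : ℕ, ∑ i ∈ Finset.range n,
      (∫⁻ t in Ioc (i : ℝ) ((i : ℝ) + 1), ENNReal.ofReal (Real.exp (-(a * t ^ p)))) ≤
      ∫⁻ t in Ioi (0 : ℝ), ENNReal.ofReal (Real.exp (-(a * t ^ p))) := by
    intro n
    have heq : ∑ i ∈ Finset.range n,
        (∫⁻ t in Ioc (i : ℝ) ((i : ℝ) + 1), ENNReal.ofReal (Real.exp (-(a * t ^ p)))) =
        ∫⁻ t in Ioc (0 : ℝ) (n : ℝ), ENNReal.ofReal (Real.exp (-(a * t ^ p))) := by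
      induction n with
      | zero => simp
      | succ m ih =>
        rw [Finset.sum_range_succ, ih, ← lintegral_union measurableSet_Ioc
          (Set.Ioc_disjoint_Ioc_of_le le_rfl),
          Set.Ioc_union_Ioc_eq_Ioc (Nat.cast_nonneg m) (by linarith [Nat.cast_nonneg (α := ℝ) m])]
        norm_num
    rw [heq]
    exact lintegral_mono_set Set.Ioc_subset_Ioi_self
  -- put everything together
  calc μ {ω | ∃ τ : ℕ, A τ ω - r * τ > b}
      = μ (⋃ τ : ℕ, {ω | A τ ω - r * τ > b}) := by rw [Set.setOf_exists]
    _ ≤ ∑' τ : ℕ, μ {ω | A τ ω - r * τ > b} := measure_iUnion_le _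
    _ = μ {ω | A 0 ω - r * ((0 : ℕ) : ℝ) > b} +
        ∑' n : ℕ, μ {ω | A (n + 1) ω - r * ((n + 1 : ℕ) : ℝ) > b} :=
        tsum_eq_zero_add' ENNReal.summable
    _ = ∑' n : ℕ, μ {ω | A (n + 1) ω - r * ((n + 1 : ℕ) : ℝ) > b} := by
        rw [hS0, zero_add]
    _ ≤ ∑' n : ℕ, ∫⁻ t in Ioc (n : ℝ) ((n : ℝ) + 1),
          ENNReal.ofReal (Real.exp (-(a * t ^ p))) := ENNReal.tsum_le_tsum hterm
    _ ≤ ∫⁻ t in Ioi (0 : ℝ), ENNReal.ofReal (Real.exp (-(a * t ^ p))) :=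
        ENNReal.tsum_le_of_sum_range_le hsum
    _ = ENNReal.ofReal (∫ t in Ioi (0 : ℝ), Real.exp (-(a * t ^ p))) :=
        (ofReal_integral_eq_lintegral_ofReal (fbm_exp_rpow_integrableOn ha hp)
          (ae_of_all _ fun t => (Real.exp_pos _).le)).symm
    _ = ENNReal.ofReal ((1 / a) ^ (1 / p) * Real.Gamma (1 / p) / p) := by
        rw [fbm_exp_rpow_integral ha hp]
    _ = ENNReal.ofReal (Real.Gamma (1 / p) / (p * ϑ ^ (1 / p)) *
          b ^ (-(1 - (H + β)) / β)) := by
        congr 1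
        have hϑp : (0 : ℝ) < ϑ ^ (1 / p) := Real.rpow_pos_of_pos hϑpos _
        have hbp : (0 : ℝ) < b ^ ((1 - (H + β)) / β) := Real.rpow_pos_of_pos hb _
        have e1 : (1 / a) ^ (1 / p) = (ϑ ^ (1 / p))⁻¹ * (b ^ ((1 - (H + β)) / β))⁻¹ := by
          rw [hadef, one_div, Real.inv_rpow (by positivity),
            Real.mul_rpow hϑpos.le (Real.rpow_pos_of_pos hb _).le,
            ← Real.rpow_mul hb.le,
            show 2 * (1 - (H + β)) * (1 / p) = (1 - (H + β)) / β by
              rw [hpdef]; field_simp,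
            mul_inv]
        have e2 : b ^ (-(1 - (H + β)) / β) = (b ^ ((1 - (H + β)) / β))⁻¹ := by
          rw [neg_div, Real.rpow_neg hb.le]
        rw [e1, e2]
        ring
end

section
/- Let c₁, c₂ > 0, H ∈ (1/2,1), and for n ≥ 2 define f(n, b) = n^(1−H) · c₁ · b^(1+H) · exp(−c₂ · b^(2−2H) · n^(2H−2)). If b = n·(c₀ log n)^(1/(2−2H)) with c₀ > 2/c₂, then f(n, b) ≤ (c₀ log n)^((1+H)/(2−2H)) · c₁ · n^(2−c₀c₂), and hence f(n,b) is bounded above by a constant independent of n. -/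
open Real Set

theorem scaling_bound (c₀ c₁ c₂ H : ℝ) (hc₁ : 0 < c₁) (hc₂ : 0 < c₂)
    (hH : H ∈ Set.Ioo (1/2 : ℝ) 1) (hc₀ : c₀ > 2 / c₂) :
    (∀ n : ℕ, 2 ≤ n →
        (n : ℝ) ^ (1 - H) * c₁ * ((n : ℝ) * (c₀ * Real.log n) ^ (1 / (2 - 2 * H))) ^ (1 + H) *
            Real.exp (-c₂ * ((n : ℝ) * (c₀ * Real.log n) ^ (1 / (2 - 2 * H))) ^ (2 - 2 * H) *
              (n : ℝ) ^ (2 * H - 2)) ≤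
          (c₀ * Real.log n) ^ ((1 + H) / (2 - 2 * H)) * c₁ * (n : ℝ) ^ (2 - c₀ * c₂)) ∧
      ∃ M : ℝ, ∀ n : ℕ, 2 ≤ n →
        (n : ℝ) ^ (1 - H) * c₁ * ((n : ℝ) * (c₀ * Real.log n) ^ (1 / (2 - 2 * H))) ^ (1 + H) *
            Real.exp (-c₂ * ((n : ℝ) * (c₀ * Real.log n) ^ (1 / (2 - 2 * H))) ^ (2 - 2 * H) *
              (n : ℝ) ^ (2 * H - 2)) ≤ M := by
  obtain ⟨hH1, hH2⟩ := hH
  have hc₀pos : 0 < c₀ := lt_trans (div_pos two_pos hc₂) hc₀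
  have h2H : (0:ℝ) < 2 - 2 * H := by linarith
  have hcc : 2 < c₀ * c₂ := by
    have := (div_lt_iff₀ hc₂).mp hc₀
    linarith
  set β : ℝ := (1 + H) / (2 - 2 * H) with hβdef
  have hβ : 0 < β := div_pos (by linarith) h2H
  -- key equality
  have key : ∀ n : ℕ, 2 ≤ n →
      (n : ℝ) ^ (1 - H) * c₁ * ((n : ℝ) * (c₀ * Real.log n) ^ (1 / (2 - 2 * H))) ^ (1 + H) *
          Real.exp (-c₂ * ((n : ℝ) * (c₀ * Real.log n) ^ (1 / (2 - 2 * H))) ^ (2 - 2 * H) *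
            (n : ℝ) ^ (2 * H - 2)) =
        (c₀ * Real.log n) ^ β * c₁ * (n : ℝ) ^ (2 - c₀ * c₂) := by
    intro n hn
    have hN1 : (1:ℝ) < (n:ℝ) := by exact_mod_cast Nat.lt_of_lt_of_le one_lt_two hn
    have hN : (0:ℝ) < (n:ℝ) := by linarith
    have hlog : 0 < Real.log n := Real.log_pos hN1
    have hL : 0 < c₀ * Real.log n := mul_pos hc₀pos hlog
    have e1 : ((n : ℝ) * (c₀ * Real.log n) ^ (1 / (2 - 2 * H))) ^ (1 + H)
        = (n:ℝ) ^ (1 + H) * (c₀ * Real.log n) ^ β := by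
      rw [Real.mul_rpow hN.le (Real.rpow_nonneg hL.le _), ← Real.rpow_mul hL.le]
      congr 1
      rw [hβdef]; ring
    have e2 : ((n : ℝ) * (c₀ * Real.log n) ^ (1 / (2 - 2 * H))) ^ (2 - 2 * H)
        = (n:ℝ) ^ (2 - 2 * H) * (c₀ * Real.log n) := by
      rw [Real.mul_rpow hN.le (Real.rpow_nonneg hL.le _), ← Real.rpow_mul hL.le,
        one_div_mul_cancel h2H.ne', Real.rpow_one]
    rw [e1, e2]
    have e3 : -c₂ * ((n:ℝ) ^ (2 - 2 * H) * (c₀ * Real.log n)) * (n : ℝ) ^ (2 * H - 2)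
        = -(c₂ * c₀) * Real.log n := by
      have : (n:ℝ) ^ (2 - 2 * H) * (n : ℝ) ^ (2 * H - 2) = 1 := by
        rw [← Real.rpow_add hN]; norm_num
      calc -c₂ * ((n:ℝ) ^ (2 - 2 * H) * (c₀ * Real.log n)) * (n : ℝ) ^ (2 * H - 2)
          = -(c₂ * c₀) * Real.log n * ((n:ℝ) ^ (2 - 2 * H) * (n : ℝ) ^ (2 * H - 2)) := by ring
        _ = -(c₂ * c₀) * Real.log n := by rw [this, mul_one]
    rw [e3]
    have e4 : Real.exp (-(c₂ * c₀) * Real.log n) = (n:ℝ) ^ (-(c₂ * c₀)) := by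
      rw [Real.rpow_def_of_pos hN, mul_comm]
    rw [e4]
    have e5 : (n:ℝ) ^ (1 - H) * (n:ℝ) ^ (1 + H) * (n:ℝ) ^ (-(c₂ * c₀))
        = (n:ℝ) ^ (2 - c₀ * c₂) := by
      rw [← Real.rpow_add hN, ← Real.rpow_add hN]; ring_nf
    calc (n : ℝ) ^ (1 - H) * c₁ * ((n:ℝ) ^ (1 + H) * (c₀ * Real.log n) ^ β) *
          (n:ℝ) ^ (-(c₂ * c₀))
        = (c₀ * Real.log n) ^ β * c₁ *
          ((n:ℝ) ^ (1 - H) * (n:ℝ) ^ (1 + H) * (n:ℝ) ^ (-(c₂ * c₀))) := by ring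
      _ = (c₀ * Real.log n) ^ β * c₁ * (n : ℝ) ^ (2 - c₀ * c₂) := by rw [e5]
  constructor
  · intro n hn
    rw [key n hn]
  · -- boundedness
    set ε : ℝ := (c₀ * c₂ - 2) / (2 * β) with hεdef
    have hε : 0 < ε := div_pos (by linarith) (by linarith)
    refine ⟨(c₀ / ε) ^ β * c₁, fun n hn => ?_⟩
    rw [key n hn]
    have hN1 : (1:ℝ) < (n:ℝ) := by exact_mod_cast Nat.lt_of_lt_of_le one_lt_two hn
    have hN : (0:ℝ) < (n:ℝ) := by linarith
    have hlog : 0 < Real.log n := Real.log_pos hN1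
    have hL : 0 < c₀ * Real.log n := mul_pos hc₀pos hlog
    have hb1 : c₀ * Real.log n ≤ c₀ / ε * (n:ℝ) ^ ε := by
      have := Real.log_le_rpow_div hN.le hε
      calc c₀ * Real.log n ≤ c₀ * ((n:ℝ) ^ ε / ε) :=
            mul_le_mul_of_nonneg_left this hc₀pos.le
        _ = c₀ / ε * (n:ℝ) ^ ε := by ring
    have hb2 : (c₀ * Real.log n) ^ β ≤ (c₀ / ε) ^ β * (n:ℝ) ^ (ε * β) := by
      calc (c₀ * Real.log n) ^ β ≤ (c₀ / ε * (n:ℝ) ^ ε) ^ β :=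
            Real.rpow_le_rpow hL.le hb1 hβ.le
        _ = (c₀ / ε) ^ β * (n:ℝ) ^ (ε * β) := by
            rw [Real.mul_rpow (by positivity) (Real.rpow_nonneg hN.le _),
              ← Real.rpow_mul hN.le]
    have hexp : ε * β = (c₀ * c₂ - 2) / 2 := by
      rw [hεdef]; field_simp
    have hmain : (c₀ * Real.log n) ^ β * c₁ * (n : ℝ) ^ (2 - c₀ * c₂)
        ≤ (c₀ / ε) ^ β * (n:ℝ) ^ (ε * β) * c₁ * (n : ℝ) ^ (2 - c₀ * c₂) := by
      have hpos : (0:ℝ) < c₁ * (n : ℝ) ^ (2 - c₀ * c₂) := by positivity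
      calc (c₀ * Real.log n) ^ β * c₁ * (n : ℝ) ^ (2 - c₀ * c₂)
          = (c₀ * Real.log n) ^ β * (c₁ * (n : ℝ) ^ (2 - c₀ * c₂)) := by ring
        _ ≤ ((c₀ / ε) ^ β * (n:ℝ) ^ (ε * β)) * (c₁ * (n : ℝ) ^ (2 - c₀ * c₂)) :=
            mul_le_mul_of_nonneg_right hb2 hpos.le
        _ = (c₀ / ε) ^ β * (n:ℝ) ^ (ε * β) * c₁ * (n : ℝ) ^ (2 - c₀ * c₂) := by ring
    refine hmain.trans ?_
    have hfinal : (n:ℝ) ^ (ε * β) * (n : ℝ) ^ (2 - c₀ * c₂) ≤ 1 := by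
      rw [← Real.rpow_add hN]
      apply Real.rpow_le_one_of_one_le_of_nonpos hN1.le
      rw [hexp]; linarith
    calc (c₀ / ε) ^ β * (n:ℝ) ^ (ε * β) * c₁ * (n : ℝ) ^ (2 - c₀ * c₂)
        = (c₀ / ε) ^ β * c₁ * ((n:ℝ) ^ (ε * β) * (n : ℝ) ^ (2 - c₀ * c₂)) := by ring
      _ ≤ (c₀ / ε) ^ β * c₁ * 1 := by
          apply mul_le_mul_of_nonneg_left hfinal (by positivity)
      _ = (c₀ / ε) ^ β * c₁ := mul_one _
end
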